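/- Let m_h, m_f > 0, M0 = diag(m_h, m_h, m_f, m_f), and for q = (q1, q2, q3, q4) ∈ ℝ⁴ with q4 ≠ 0 let Z(q) be the Jacobian of z2(q) = (q1, q2, q1 − q4 cos q3, q2 − q4 sin q3) and M_ss(q) = Z(q)ᵀ M0 Z(q); let M_ds = diag(m_h, m_h). At a lift-off transition, given pre-transition double-support momenta p_old = M_ds (q̇1, q̇2)ᵀ, set ż1 = Z(q)⁻¹ (q̇1, q̇2, 0, 0)ᵀ (the lifted foot is stationary at lift-off) and p_new = M_ss(q) ż1. Then the kinetic energy is preserved across the transition: (1/2) p_newᵀ M_ss(q)⁻¹ p_new = (1/2) p_oldᵀ M_ds⁻¹ p_old. -/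

import Mathlib

open Matrix

/-- The coordinates `z2(q) = (q1, q2, s1(q), s2(q))` of the V-SLIP model with feet and knees,
where `s(q) = (q1 - q4 cos q3, q2 - q4 sin q3)` is the swing-foot position
(indices: `q 0 = q1, q 1 = q2, q 2 = q3, q 3 = q4`). -/
noncomputable def z2map (q : Fin 4 → ℝ) : Fin 4 → ℝ :=
  ![q 0, q 1, q 0 - q 3 * Real.cos (q 2), q 1 - q 3 * Real.sin (q 2)]

/-- The Jacobian `Z(q) = ∂z2/∂q`. -/
noncomputable def Zmat (q : Fin 4 → ℝ) : Matrix (Fin 4) (Fin 4) ℝ :=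
  Matrix.of fun i j => fderiv ℝ (fun q' : Fin 4 → ℝ => z2map q' i) q (Pi.single j 1)

lemma Zmat_eq (q : Fin 4 → ℝ) :
    Zmat q = !![1,0,0,0; 0,1,0,0;
      1,0, q 3 * Real.sin (q 2), -Real.cos (q 2);
      0,1, -(q 3 * Real.cos (q 2)), -Real.sin (q 2)] := by
  have h0 := (ContinuousLinearMap.proj 0 : (Fin 4 → ℝ) →L[ℝ] ℝ).hasFDerivAt (x := q)
  have h1 := (ContinuousLinearMap.proj 1 : (Fin 4 → ℝ) →L[ℝ] ℝ).hasFDerivAt (x := q)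
  have h3 := (ContinuousLinearMap.proj 3 : (Fin 4 → ℝ) →L[ℝ] ℝ).hasFDerivAt (x := q)
  have hc := (Real.hasDerivAt_cos (q 2)).comp_hasFDerivAt q
      ((ContinuousLinearMap.proj 2 : (Fin 4 → ℝ) →L[ℝ] ℝ).hasFDerivAt (x := q))
  have hs := (Real.hasDerivAt_sin (q 2)).comp_hasFDerivAt q
      ((ContinuousLinearMap.proj 2 : (Fin 4 → ℝ) →L[ℝ] ℝ).hasFDerivAt (x := q))
  have H0 : ∀ j, Zmat q 0 j = ![(1:ℝ),0,0,0] j := by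
    intro j
    show fderiv ℝ (⇑(ContinuousLinearMap.proj (0:Fin 4) : (Fin 4 → ℝ) →L[ℝ] ℝ)) q (Pi.single j 1) = _
    rw [h0.fderiv]
    fin_cases j <;> simp [Pi.single_apply]
  have H1 : ∀ j, Zmat q 1 j = ![(0:ℝ),1,0,0] j := by
    intro j
    show fderiv ℝ (⇑(ContinuousLinearMap.proj (1:Fin 4) : (Fin 4 → ℝ) →L[ℝ] ℝ)) q (Pi.single j 1) = _
    rw [h1.fderiv]
    fin_cases j <;> simp [Pi.single_apply]
  have H2 : ∀ j, Zmat q 2 j = ![(1:ℝ),0, q 3 * Real.sin (q 2), -Real.cos (q 2)] j := by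
    intro j
    show fderiv ℝ (fun q' : Fin 4 → ℝ =>
      (ContinuousLinearMap.proj (0:Fin 4) : (Fin 4 → ℝ) →L[ℝ] ℝ) q' -
        (ContinuousLinearMap.proj (3:Fin 4) : (Fin 4 → ℝ) →L[ℝ] ℝ) q' *
          (Real.cos ∘ ⇑(ContinuousLinearMap.proj (2:Fin 4) : (Fin 4 → ℝ) →L[ℝ] ℝ)) q') q (Pi.single j 1) = _
    have e := (h0.sub (h3.mul hc)).fderiv
    simp only [Pi.sub_def, Pi.mul_def] at e
    rw [e]
    fin_cases j <;> simp [Pi.single_apply] <;> ring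
  have H3 : ∀ j, Zmat q 3 j = ![(0:ℝ),1, -(q 3 * Real.cos (q 2)), -Real.sin (q 2)] j := by
    intro j
    show fderiv ℝ (fun q' : Fin 4 → ℝ =>
      (ContinuousLinearMap.proj (1:Fin 4) : (Fin 4 → ℝ) →L[ℝ] ℝ) q' -
        (ContinuousLinearMap.proj (3:Fin 4) : (Fin 4 → ℝ) →L[ℝ] ℝ) q' *
          (Real.sin ∘ ⇑(ContinuousLinearMap.proj (2:Fin 4) : (Fin 4 → ℝ) →L[ℝ] ℝ)) q') q (Pi.single j 1) = _
    have e := (h1.sub (h3.mul hs)).fderiv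
    simp only [Pi.sub_def, Pi.mul_def] at e
    rw [e]
    fin_cases j <;> simp [Pi.single_apply] <;> ring
  ext i j
  fin_cases i
  · exact H0 j
  · exact H1 j
  · exact H2 j
  · exact H3 j

lemma Zmat_det (q : Fin 4 → ℝ) : (Zmat q).det = -(q 3) := by
  rw [Zmat_eq]
  simp [Matrix.det_succ_row_zero, Fin.sum_univ_succ]
  linear_combination (-(q 3)) * Real.sin_sq_add_cos_sq (q 2)

/-- `M0 = diag(m_h, m_h, m_f, m_f)`. -/
noncomputable def M0mat (mh mf : ℝ) : Matrix (Fin 4) (Fin 4) ℝ :=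
  Matrix.diagonal ![mh, mh, mf, mf]

/-- The single-support mass matrix `M_ss(q) = Z(q)ᵀ M0 Z(q)`. -/
noncomputable def Mss (mh mf : ℝ) (q : Fin 4 → ℝ) : Matrix (Fin 4) (Fin 4) ℝ :=
  (Zmat q)ᵀ * M0mat mh mf * Zmat q

/-- The double-support mass matrix `M_ds = diag(m_h, m_h)`. -/
noncomputable def Mds (mh : ℝ) : Matrix (Fin 2) (Fin 2) ℝ :=
  Matrix.diagonal ![mh, mh]

/-- Energy preservation at the lift-off transition of the V-SLIP model with feet and knees:
with pre-transition double-support momenta `p_old = M_ds (q̇1, q̇2)ᵀ`,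
`ż1 = Z(q)⁻¹ (q̇1, q̇2, 0, 0)ᵀ` (the lifted foot being stationary at lift-off) and
post-transition momenta `p_new = M_ss(q) ż1`, the kinetic energy is preserved:
`(1/2) p_newᵀ M_ss(q)⁻¹ p_new = (1/2) p_oldᵀ M_ds⁻¹ p_old`. -/
theorem stmt16 (mh mf : ℝ) (hmh : 0 < mh) (hmf : 0 < mf)
    (q : Fin 4 → ℝ) (hq4 : q 3 ≠ 0) (qdot1 qdot2 : ℝ)
    (p_old : Fin 2 → ℝ) (hp_old : p_old = Mds mh *ᵥ ![qdot1, qdot2])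
    (zdot1 : Fin 4 → ℝ) (hzdot1 : zdot1 = (Zmat q)⁻¹ *ᵥ ![qdot1, qdot2, 0, 0])
    (p_new : Fin 4 → ℝ) (hp_new : p_new = Mss mh mf q *ᵥ zdot1) :
    (1 / 2) * (p_new ⬝ᵥ ((Mss mh mf q)⁻¹ *ᵥ p_new))
      = (1 / 2) * (p_old ⬝ᵥ ((Mds mh)⁻¹ *ᵥ p_old)) := by
  have hZdet : IsUnit (Zmat q).det := by
    rw [Zmat_det]; exact (isUnit_iff_ne_zero).2 (by simpa using hq4)
  have hM0det : (M0mat mh mf).det = mh * (mh * (mf * (mf * 1))) := by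
    simp [M0mat, Matrix.det_diagonal, Fin.prod_univ_four]; ring
  have hMssdet : IsUnit (Mss mh mf q).det := by
    rw [Mss, Matrix.det_mul, Matrix.det_mul, Matrix.det_transpose, hM0det]
    exact (isUnit_iff_ne_zero).2 (by
      have := hZdet.ne_zero
      positivity)
  have key1 : (Mss mh mf q)⁻¹ *ᵥ p_new = zdot1 := by
    rw [hp_new, Matrix.mulVec_mulVec, Matrix.nonsing_inv_mul _ hMssdet, Matrix.one_mulVec]
  have hZu : Zmat q *ᵥ zdot1 = ![qdot1, qdot2, 0, 0] := by
    rw [hzdot1, Matrix.mulVec_mulVec, Matrix.mul_nonsing_inv _ hZdet, Matrix.one_mulVec]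
  have key2 : p_new ⬝ᵥ zdot1
      = (M0mat mh mf *ᵥ ![qdot1, qdot2, 0, 0]) ⬝ᵥ ![qdot1, qdot2, 0, 0] := by
    rw [hp_new, Mss, Matrix.mul_assoc, ← Matrix.mulVec_mulVec, ← Matrix.mulVec_mulVec, hZu,
      Matrix.mulVec_transpose, ← Matrix.dotProduct_mulVec, hZu]
  rw [key1, key2, hp_old]
  have hmh' : mh ≠ 0 := ne_of_gt hmh
  have hMds : (Mds mh)⁻¹ = Matrix.diagonal ![mh⁻¹, mh⁻¹] := by
    apply Matrix.inv_eq_right_inv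
    rw [Mds, Matrix.diagonal_mul_diagonal]
    ext i j
    fin_cases i <;> fin_cases j <;> simp [Matrix.diagonal, hmh']
  rw [hMds]
  simp [M0mat, Mds, Matrix.mulVec_diagonal, dotProduct, Fin.sum_univ_four,
    Fin.sum_univ_two]
  field_simp
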